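/- arXiv:1406.4585 — 4 statements merged into one kernel-verified Lean document; each statement's English description precedes it below -/
import Mathlib

section
/- In the coordinates u_j = y_1 + ⋯ + y_j, the quadratic Poisson bracket satisfies {u_i, u_j}^q = u_i(u_j − u_i) for i < j. -/
lemma fderiv_sum_coord {m : ℕ} (S : Finset (Fin m)) (y : Fin m → ℝ) (a : Fin m) :
    fderiv ℝ (fun z : Fin m → ℝ => ∑ l ∈ S, z l) y (Pi.single a 1)
      = if a ∈ S then 1 else 0 := by
  have h : (fun z : Fin m → ℝ => ∑ l ∈ S, z l)
      = (∑ l ∈ S, ContinuousLinearMap.proj (R := ℝ) (φ := fun _ : Fin m => ℝ) l) := by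
    ext z; simp
  rw [h, ContinuousLinearMap.fderiv]
  simp [ContinuousLinearMap.proj_apply, Pi.single_apply, Finset.sum_ite_eq' S a]

/-- The quadratic Poisson bracket on ℝ^m. -/
noncomputable def qbracket {m : ℕ} (F G : (Fin m → ℝ) → ℝ) (y : Fin m → ℝ) : ℝ :=
  ∑ i : Fin m, ∑ j ∈ Finset.univ.filter (fun j => i < j),
    y i * y j * (fderiv ℝ F y (Pi.single i 1) * fderiv ℝ G y (Pi.single j 1)
      - fderiv ℝ F y (Pi.single j 1) * fderiv ℝ G y (Pi.single i 1))

/-- in the coordinates `u_i = y_1 + ⋯ + y_i`, the quadratic bracket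
satisfies `{u_i, u_j}^q = u_i (u_j − u_i)` for `i < j`. -/
theorem bracket_of_partial_sums (m : ℕ) (i j : Fin m) (hij : i < j) (y : Fin m → ℝ) :
    qbracket (fun z => ∑ l ∈ Finset.univ.filter (fun l => l ≤ i), z l)
      (fun z => ∑ l ∈ Finset.univ.filter (fun l => l ≤ j), z l) y
      = (∑ l ∈ Finset.univ.filter (fun l => l ≤ i), y l) *
        ((∑ l ∈ Finset.univ.filter (fun l => l ≤ j), y l)
          - ∑ l ∈ Finset.univ.filter (fun l => l ≤ i), y l) := by
  have key : ∀ a b : Fin m,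
      (if a < b then y a * y b * ((if a ≤ i then (1:ℝ) else 0) * (if b ≤ j then 1 else 0)
        - (if a ≤ j then (1:ℝ) else 0) * (if b ≤ i then 1 else 0)) else 0)
      = (if a ≤ i then y a else 0) * ((if b ≤ j then y b else 0) - (if b ≤ i then y b else 0)) := by
    intro a b
    simp only [Fin.lt_def, Fin.le_def] at hij ⊢
    split_ifs <;> first | ring1 | (exfalso; omega)
  have hL : qbracket (fun z => ∑ l ∈ Finset.univ.filter (fun l => l ≤ i), z l)
      (fun z => ∑ l ∈ Finset.univ.filter (fun l => l ≤ j), z l) y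
      = ∑ a : Fin m, ∑ b : Fin m,
        (if a < b then y a * y b * ((if a ≤ i then (1:ℝ) else 0) * (if b ≤ j then 1 else 0)
          - (if a ≤ j then (1:ℝ) else 0) * (if b ≤ i then 1 else 0)) else 0) := by
    unfold qbracket
    refine Finset.sum_congr rfl fun a _ => ?_
    rw [Finset.sum_filter]
    refine Finset.sum_congr rfl fun b _ => ?_
    rw [fderiv_sum_coord, fderiv_sum_coord, fderiv_sum_coord, fderiv_sum_coord]
    simp only [Finset.mem_filter, Finset.mem_univ, true_and]
    by_cases h : a < b
    · simp only [if_pos h]; ring1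
    · simp only [if_neg h]
  rw [hL, Finset.sum_filter, Finset.sum_filter,
    ← Finset.sum_sub_distrib, Finset.sum_mul_sum]
  exact Finset.sum_congr rfl fun a _ => Finset.sum_congr rfl fun b _ => key a b
end

section
/- For m odd, the function F_1(y) = y_1 · (y_3 y_5 ⋯ y_m)/(y_2 y_4 ⋯ y_{m-1}) is a Casimir of the quadratic Poisson bracket: {F_1, y_i}^q = 0 for all i, wherever the denominator is nonzero. -/
/-- `F₁ = y_1 (y_3 y_5 ⋯ y_m)/(y_2 y_4 ⋯ y_{m-1})`; with 0-based indexing the numerator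
is the product over even indices and the denominator the product over odd indices. -/
noncomputable def F1 (m : ℕ) (z : Fin m → ℝ) : ℝ :=
  (∏ i ∈ Finset.univ.filter (fun i : Fin m => Even (i : ℕ)), z i) /
  (∏ i ∈ Finset.univ.filter (fun i : Fin m => Odd (i : ℕ)), z i)

lemma F1_eq_prod (m : ℕ) (z : Fin m → ℝ) :
    F1 m z = ∏ i : Fin m, (if Even (i : ℕ) then z i else (z i)⁻¹) := by
  unfold F1
  rw [div_eq_mul_inv, ← Finset.prod_inv_distrib,
    ← Finset.prod_filter_mul_prod_filter_not Finset.univ (fun i : Fin m => Even (i : ℕ))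
      (fun i => if Even (i : ℕ) then z i else (z i)⁻¹)]
  congr 1
  · refine Finset.prod_congr rfl fun i hi => ?_
    simp only [Finset.mem_filter] at hi
    simp [hi.2]
  · rw [show (Finset.univ.filter fun i : Fin m => Odd (i : ℕ)) =
        (Finset.univ.filter fun i : Fin m => ¬ Even (i : ℕ)) by
      simp [Nat.not_even_iff_odd]]
    refine Finset.prod_congr rfl fun i hi => ?_
    simp only [Finset.mem_filter] at hi
    simp [hi.2]

lemma key_deriv (m : ℕ) (y : Fin m → ℝ) (hnz : ∀ j : Fin m, Odd (j : ℕ) → y j ≠ 0)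
    (k : Fin m) :
    y k * fderiv ℝ (F1 m) y (Pi.single k 1) = (-1 : ℝ) ^ (k : ℕ) * F1 m y := by
  classical
  set g : Fin m → (Fin m → ℝ) → ℝ := fun i z => if Even (i : ℕ) then z i else (z i)⁻¹ with hg
  set g' : Fin m → (Fin m → ℝ) →L[ℝ] ℝ := fun i =>
    if Even (i : ℕ) then ContinuousLinearMap.proj i
    else (-(y i ^ 2)⁻¹) • ContinuousLinearMap.proj i with hg'
  have hder : ∀ i ∈ (Finset.univ : Finset (Fin m)), HasFDerivAt (g i) (g' i) y := by
    intro i _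
    by_cases h : Even (i : ℕ)
    · simp only [hg, hg', if_pos h]
      exact (ContinuousLinearMap.proj i : (Fin m → ℝ) →L[ℝ] ℝ).hasFDerivAt (x := y)
    · have hy : y i ≠ 0 := hnz i (Nat.not_even_iff_odd.mp h)
      simp only [hg, hg', if_neg h]
      exact (hasDerivAt_inv hy).comp_hasFDerivAt y
        ((ContinuousLinearMap.proj i : (Fin m → ℝ) →L[ℝ] ℝ).hasFDerivAt (x := y))
  have hprod := HasFDerivAt.finset_prod hder
  have hF : HasFDerivAt (F1 m)
      (∑ i : Fin m, (∏ j ∈ Finset.univ.erase i, g j y) • g' i) y := by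
    refine hprod.congr_of_eventuallyEq ?_
    filter_upwards with z
    exact F1_eq_prod m z
  rw [hF.fderiv]
  rw [ContinuousLinearMap.sum_apply]
  rw [Finset.sum_eq_single k]
  · by_cases h : Even (k : ℕ)
    · have : (-1 : ℝ) ^ (k : ℕ) = 1 := Even.neg_one_pow h
      rw [this, F1_eq_prod]
      simp only [hg', h, if_true, ContinuousLinearMap.smul_apply,
        ContinuousLinearMap.proj_apply, ContinuousLinearMap.coe_smul', Pi.single_eq_same]
      rw [smul_eq_mul, mul_one, one_mul]
      have hrw : (∏ i : Fin m, if Even (i : ℕ) then y i else (y i)⁻¹) = ∏ j : Fin m, g j y := rfl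
      rw [hrw, ← Finset.mul_prod_erase Finset.univ (fun j => g j y) (Finset.mem_univ k)]
      congr 1
      simp [hg, h]
    · have hodd := Nat.not_even_iff_odd.mp h
      have hy : y k ≠ 0 := hnz k hodd
      simp only [hg', if_neg h, ContinuousLinearMap.smul_apply, ContinuousLinearMap.coe_smul',
        ContinuousLinearMap.proj_apply, Pi.single_eq_same, smul_eq_mul, mul_one]
      rw [Odd.neg_one_pow hodd, F1_eq_prod]
      have hrw : (∏ i : Fin m, if Even (i : ℕ) then y i else (y i)⁻¹) = ∏ j : Fin m, g j y := rfl
      rw [hrw, ← Finset.mul_prod_erase Finset.univ (fun j => g j y) (Finset.mem_univ k)]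
      have hk : g k y = (y k)⁻¹ := by simp [hg, h]
      rw [hk]
      field_simp
  · intro b _ hbk
    simp only [hg', ContinuousLinearMap.smul_apply, ContinuousLinearMap.proj_apply]
    split_ifs <;> simp [Pi.single_eq_of_ne hbk]
  · simp

lemma parity_sum (m : ℕ) (hm : Odd m) (i : Fin m) :
    ∑ a ∈ Finset.univ.filter (fun a : Fin m => a < i), (-1 : ℝ) ^ (a : ℕ) =
    ∑ b ∈ Finset.univ.filter (fun b : Fin m => i < b), (-1 : ℝ) ^ (b : ℕ) := by
  classical
  have h1 : ∑ a ∈ Finset.univ.filter (fun a : Fin m => a < i), (-1 : ℝ) ^ (a : ℕ) =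
      ∑ k ∈ Finset.range (i : ℕ), (-1 : ℝ) ^ k := by
    rw [Finset.sum_filter]
    simp only [Fin.lt_def]
    rw [Fin.sum_univ_eq_sum_range
      (fun k => if k < (i : ℕ) then (-1 : ℝ) ^ k else 0), ← Finset.sum_filter]
    congr 1
    ext k
    simp only [Finset.mem_filter, Finset.mem_range]
    omega
  have h2 : ∑ b ∈ Finset.univ.filter (fun b : Fin m => i < b), (-1 : ℝ) ^ (b : ℕ) =
      (∑ k ∈ Finset.range m, (-1 : ℝ) ^ k) - ∑ k ∈ Finset.range ((i : ℕ) + 1), (-1 : ℝ) ^ k := by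
    rw [Finset.sum_filter]
    simp only [Fin.lt_def]
    rw [Fin.sum_univ_eq_sum_range
      (fun k => if (i : ℕ) < k then (-1 : ℝ) ^ k else 0), ← Finset.sum_filter]
    rw [← Finset.sum_sdiff_eq_sub (by
      intro k hk
      simp only [Finset.mem_range] at hk ⊢
      omega : Finset.range ((i : ℕ) + 1) ⊆ Finset.range m)]
    congr 1
    ext k
    simp only [Finset.mem_filter, Finset.mem_range, Finset.mem_sdiff]
    omega
  rw [h1, h2, neg_one_geom_sum, neg_one_geom_sum, neg_one_geom_sum]
  have hmo : ¬ Even m := Nat.not_even_iff_odd.mpr hm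
  by_cases h : Even (i : ℕ)
  · simp [h, hmo, Nat.even_add_one, h]
  · simp [h, hmo, Nat.even_add_one, h]

/-- for `m` odd, `F₁` is a Casimir of the quadratic bracket:
`{F₁, y_i}^q = 0` for every `i`, wherever the denominator is nonzero. -/
theorem F1_is_casimir (m : ℕ) (hm : Odd m) (y : Fin m → ℝ)
    (hnz : ∀ j : Fin m, Odd (j : ℕ) → y j ≠ 0) (i : Fin m) :
    qbracket (F1 m) (fun z => z i) y = 0 := by
  classical
  unfold qbracket
  set A : Fin m → ℝ := fun k => fderiv ℝ (F1 m) y (Pi.single k 1) with hA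
  have hev : ∀ k : Fin m, fderiv ℝ (fun z : Fin m → ℝ => z i) y (Pi.single k 1)
      = if i = k then (1 : ℝ) else 0 := by
    intro k
    have : fderiv ℝ (fun z : Fin m → ℝ => z i) y
        = (ContinuousLinearMap.proj i : (Fin m → ℝ) →L[ℝ] ℝ) :=
      (ContinuousLinearMap.proj i : (Fin m → ℝ) →L[ℝ] ℝ).fderiv
    rw [this]
    simp [Pi.single_apply, eq_comm]
  simp only [hev, ← hA]
  have step : ∀ a : Fin m,
      (∑ b ∈ Finset.univ.filter (fun b => a < b),
        y a * y b * (A a * (if i = b then (1:ℝ) else 0) - A b * (if i = a then (1:ℝ) else 0)))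
      = (if a < i then y a * y i * A a else 0)
        - (if i = a then ∑ b ∈ Finset.univ.filter (fun b => a < b), y a * y b * A b else 0) := by
    intro a
    rw [show (∑ b ∈ Finset.univ.filter (fun b => a < b),
        y a * y b * (A a * (if i = b then (1:ℝ) else 0) - A b * (if i = a then (1:ℝ) else 0)))
      = (∑ b ∈ Finset.univ.filter (fun b => a < b), if i = b then y a * y b * A a else 0)
        - (∑ b ∈ Finset.univ.filter (fun b => a < b),
            if i = a then y a * y b * A b else 0) by
      rw [← Finset.sum_sub_distrib]
      refine Finset.sum_congr rfl fun b _ => ?_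
      split_ifs <;> ring]
    rw [Finset.sum_ite_eq, Finset.sum_ite]
    simp only [Finset.mem_filter, Finset.mem_univ, true_and, Finset.sum_const_zero, add_zero]
    congr 1
    by_cases h : i = a
    · simp [h]
    · simp [h]
  rw [Finset.sum_congr rfl (fun a _ => step a), Finset.sum_sub_distrib]
  rw [Finset.sum_ite_eq Finset.univ i
    (fun a => ∑ b ∈ Finset.univ.filter (fun b => a < b), y a * y b * A b)]
  simp only [Finset.mem_univ, if_true]
  rw [← Finset.sum_filter]
  have key := key_deriv m y hnz
  have hS1 : ∑ a ∈ Finset.univ.filter (fun a : Fin m => a < i), y a * y i * A a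
      = (y i * F1 m y) * ∑ a ∈ Finset.univ.filter (fun a : Fin m => a < i), (-1:ℝ) ^ (a:ℕ) := by
    rw [Finset.mul_sum]
    refine Finset.sum_congr rfl fun a _ => ?_
    have := key a
    calc y a * y i * A a = y i * (y a * A a) := by ring
    _ = y i * ((-1:ℝ) ^ (a:ℕ) * F1 m y) := by rw [this]
    _ = y i * F1 m y * (-1:ℝ) ^ (a:ℕ) := by ring
  have hS2 : ∑ b ∈ Finset.univ.filter (fun b : Fin m => i < b), y i * y b * A b
      = (y i * F1 m y) * ∑ b ∈ Finset.univ.filter (fun b : Fin m => i < b), (-1:ℝ) ^ (b:ℕ) := by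
    rw [Finset.mul_sum]
    refine Finset.sum_congr rfl fun b _ => ?_
    have := key b
    calc y i * y b * A b = y i * (y b * A b) := by ring
    _ = y i * ((-1:ℝ) ^ (b:ℕ) * F1 m y) := by rw [this]
    _ = y i * F1 m y * (-1:ℝ) ^ (b:ℕ) := by ring
  rw [hS1, hS2, parity_sum m hm i, sub_self]
end

section
/- For m odd and indices 1 ≤ i, j ≤ (m+1)/2, the functions F_i and F_j are in involution with respect to the quadratic Poisson bracket: {F_i, F_j}^q = 0 on the open set where all denominators are nonzero. -/
/-- `F_k = (y_1 + ⋯ + y_{2k-1}) (y_{2k+1} y_{2k+3} ⋯ y_m)/(y_{2k} y_{2k+2} ⋯ y_{m-1})`,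
written with 0-based indexing: the sum is over indices `< 2k-1`, the numerator is the
product over even indices `≥ 2k-1`, the denominator over odd indices `≥ 2k-1`. -/
noncomputable def Fk (m k : ℕ) (z : Fin m → ℝ) : ℝ :=
  (∑ i ∈ Finset.univ.filter (fun i : Fin m => (i : ℕ) < 2 * k - 1), z i) *
  ((∏ i ∈ Finset.univ.filter (fun i : Fin m => 2 * k - 1 ≤ (i : ℕ) ∧ Even (i : ℕ)), z i) /
   (∏ i ∈ Finset.univ.filter (fun i : Fin m => 2 * k - 1 ≤ (i : ℕ) ∧ Odd (i : ℕ)), z i))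
def Aset (m k : ℕ) : Finset (Fin m) := Finset.univ.filter (fun i : Fin m => (i : ℕ) < 2 * k - 1)
def Eset (m k : ℕ) : Finset (Fin m) :=
  Finset.univ.filter (fun i : Fin m => 2 * k - 1 ≤ (i : ℕ) ∧ Even (i : ℕ))
def Oset (m k : ℕ) : Finset (Fin m) :=
  Finset.univ.filter (fun i : Fin m => 2 * k - 1 ≤ (i : ℕ) ∧ Odd (i : ℕ))

noncomputable def sumCLM {m : ℕ} (s : Finset (Fin m)) : (Fin m → ℝ) →L[ℝ] ℝ :=
  ∑ a ∈ s, (ContinuousLinearMap.proj a : (Fin m → ℝ) →L[ℝ] ℝ)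

noncomputable def prodCLM {m : ℕ} (s : Finset (Fin m)) (y : Fin m → ℝ) : (Fin m → ℝ) →L[ℝ] ℝ :=
  ∑ a ∈ s, (∏ b ∈ s.erase a, y b) • (ContinuousLinearMap.proj a : (Fin m → ℝ) →L[ℝ] ℝ)

open Finset in
lemma fk_hasfderiv (m k : ℕ) (y : Fin m → ℝ) (hD : ∏ i ∈ Oset m k, y i ≠ 0) :
    HasFDerivAt (Fk m k)
      ((∑ a ∈ Aset m k, y a) •
        ((∏ a ∈ Eset m k, y a) • ((-((∏ a ∈ Oset m k, y a) ^ 2)⁻¹) • prodCLM (Oset m k) y)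
          + (∏ a ∈ Oset m k, y a)⁻¹ • prodCLM (Eset m k) y)
       + ((∏ a ∈ Eset m k, y a) * (∏ a ∈ Oset m k, y a)⁻¹) • sumCLM (Aset m k)) y := by
  have hS : HasFDerivAt (fun z : Fin m → ℝ => ∑ a ∈ Aset m k, z a) (sumCLM (Aset m k)) y :=
    HasFDerivAt.fun_sum fun a _ => hasFDerivAt_apply a y
  have hN : HasFDerivAt (fun z : Fin m → ℝ => ∏ a ∈ Eset m k, z a) (prodCLM (Eset m k) y) y :=
    HasFDerivAt.finset_prod fun a _ => hasFDerivAt_apply a y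
  have hDd : HasFDerivAt (fun z : Fin m → ℝ => ∏ a ∈ Oset m k, z a) (prodCLM (Oset m k) y) y :=
    HasFDerivAt.finset_prod fun a _ => hasFDerivAt_apply a y
  have hinv := (hasDerivAt_inv hD).comp_hasFDerivAt y hDd
  have h := hS.mul (hN.mul hinv)
  simp only [Fk, div_eq_mul_inv, Aset, Eset, Oset] at h ⊢
  convert h using 2 <;> rfl

open Finset in
lemma fk_mul_deriv (m k : ℕ) (y : Fin m → ℝ) (hnz : ∀ l : Fin m, Odd (l : ℕ) → y l ≠ 0)
    (l : Fin m) :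
    y l * fderiv ℝ (Fk m k) y (Pi.single l 1) =
      if (l : ℕ) < 2 * k - 1 then
        y l * ((∏ a ∈ Eset m k, y a) / (∏ a ∈ Oset m k, y a))
      else if Even (l : ℕ) then Fk m k y else -Fk m k y := by
  have hD : ∏ i ∈ Oset m k, y i ≠ 0 := by
    rw [Finset.prod_ne_zero_iff]
    intro a ha
    exact hnz a (Finset.mem_filter.mp ha).2.2
  rw [(fk_hasfderiv m k y hD).fderiv]
  have hsum : ∀ s : Finset (Fin m), sumCLM s (Pi.single l 1) = if l ∈ s then 1 else 0 := by
    intro s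
    simp [sumCLM, ContinuousLinearMap.sum_apply, Pi.single_apply, Finset.sum_ite_eq' s l]
  have hprod : ∀ s : Finset (Fin m),
      prodCLM s y (Pi.single l 1) = if l ∈ s then ∏ b ∈ s.erase l, y b else 0 := by
    intro s
    simp only [prodCLM, ContinuousLinearMap.sum_apply, ContinuousLinearMap.coe_smul',
      Pi.smul_apply, ContinuousLinearMap.proj_apply, Pi.single_apply, smul_eq_mul, mul_ite,
      mul_one, mul_zero]
    rw [Finset.sum_ite_eq' s l]
  simp only [ContinuousLinearMap.add_apply, ContinuousLinearMap.coe_smul', Pi.smul_apply,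
    hsum, hprod, smul_eq_mul]
  set S := ∑ a ∈ Aset m k, y a with hSdef
  set N := ∏ a ∈ Eset m k, y a with hNdef
  set D := ∏ a ∈ Oset m k, y a with hDdef
  have hFk : Fk m k y = S * (N / D) := rfl
  by_cases hl : (l : ℕ) < 2 * k - 1
  · have h1 : l ∈ Aset m k := by simp [Aset, hl]
    have h2 : l ∉ Eset m k := by simp only [Eset, mem_filter]; omega
    have h3 : l ∉ Oset m k := by simp only [Oset, mem_filter]; omega
    rw [if_pos h1, if_neg h2, if_neg h3, if_pos hl, div_eq_mul_inv]
    ring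
  · rcases Nat.even_or_odd (l : ℕ) with he | ho
    · have h1 : l ∉ Aset m k := by simp [Aset, hl]
      have h2 : l ∈ Eset m k := by simp only [Eset, mem_filter, mem_univ, true_and]
                                   exact ⟨by omega, he⟩
      have h3 : l ∉ Oset m k := by simp only [Oset, mem_filter, Nat.odd_iff, Nat.even_iff] at he ⊢
                                   omega
      have hme : y l * ∏ b ∈ (Eset m k).erase l, y b = N := Finset.mul_prod_erase _ _ h2
      rw [if_neg h1, if_pos h2, if_neg h3, if_neg hl, if_pos he, hFk]
      calc y l * (S * (N * (-(D ^ 2)⁻¹ * 0) + D⁻¹ * ∏ b ∈ (Eset m k).erase l, y b)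
              + N * D⁻¹ * 0)
          = S * (y l * ∏ b ∈ (Eset m k).erase l, y b) * D⁻¹ := by ring
        _ = S * N * D⁻¹ := by rw [hme]
        _ = S * (N / D) := by rw [div_eq_mul_inv]; ring
    · have hne : ¬ Even (l : ℕ) := Nat.not_even_iff_odd.mpr ho
      have h1 : l ∉ Aset m k := by simp [Aset, hl]
      have h2 : l ∉ Eset m k := by simp only [Eset, mem_filter]; tauto
      have h3 : l ∈ Oset m k := by simp only [Oset, mem_filter, mem_univ, true_and]
                                   exact ⟨by omega, ho⟩
      have hmo : y l * ∏ b ∈ (Oset m k).erase l, y b = D := Finset.mul_prod_erase _ _ h3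
      have hDD : D * (D ^ 2)⁻¹ = D⁻¹ := by
        rw [sq, mul_inv, ← mul_assoc, mul_inv_cancel₀ hD, one_mul]
      rw [if_neg h1, if_neg h2, if_pos h3, if_neg hl, if_neg hne, hFk]
      calc y l * (S * (N * (-(D ^ 2)⁻¹ * ∏ b ∈ (Oset m k).erase l, y b) + D⁻¹ * 0)
              + N * D⁻¹ * 0)
          = -(S * N * ((y l * ∏ b ∈ (Oset m k).erase l, y b) * (D ^ 2)⁻¹)) := by ring
        _ = -(S * N * (D * (D ^ 2)⁻¹)) := by rw [hmo]
        _ = -(S * (N / D)) := by rw [hDD, div_eq_mul_inv]; ring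

noncomputable def uu (w : ℕ → ℝ) (R F : ℝ) (c : ℕ) (n : ℕ) : ℝ :=
  if n < c then w n * R else if Even n then F else -F

lemma uu_prefix1 (w : ℕ → ℝ) (R F : ℝ) (c b : ℕ) (hb : b ≤ c) :
    ∑ n ∈ Finset.range b, uu w R F c n = (∑ n ∈ Finset.range b, w n) * R := by
  rw [Finset.sum_mul]
  refine Finset.sum_congr rfl fun n hn => ?_
  rw [uu, if_pos (lt_of_lt_of_le (Finset.mem_range.mp hn) hb)]

lemma uu_prefix2 (w : ℕ → ℝ) (R F : ℝ) (c : ℕ) (hc : Odd c)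
    (hF : F = (∑ n ∈ Finset.range c, w n) * R) :
    ∀ b, c ≤ b → ∑ n ∈ Finset.range b, uu w R F c n = if Odd b then F else 0 := by
  intro b hb
  induction b, hb using Nat.le_induction with
  | base => rw [uu_prefix1 w R F c c le_rfl, if_pos hc, hF]
  | succ b hb ih =>
    rw [Finset.sum_range_succ, ih, uu, if_neg (by omega : ¬ b < c)]
    rcases Nat.even_or_odd b with he | ho
    · rw [if_pos he, if_neg (Nat.not_odd_iff_even.mpr he),
        if_pos (by rw [Nat.odd_iff] at *; rw [Nat.even_iff] at he; omega)]
      ring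
    · rw [if_neg (Nat.not_even_iff_odd.mpr ho), if_pos ho,
        if_neg (by rw [Nat.not_odd_iff_even, Nat.even_iff]; rw [Nat.odd_iff] at ho; omega)]
      ring

lemma telescope (w : ℕ → ℝ) (i : ℕ) (hi : 1 ≤ i) :
    ∀ n, i ≤ n → ∑ b ∈ Finset.Ico (2 * i - 1) (2 * n - 1),
      (if Even b then -(∑ x ∈ Finset.range b, w x) else w b + ∑ x ∈ Finset.range b, w x) = 0 := by
  intro n hn
  induction n, hn using Nat.le_induction with
  | base => simp
  | succ n hn ih =>
    have e1 : 2 * (n + 1) - 1 = 2 * n + 1 := by omega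
    rw [e1, Finset.sum_Ico_succ_top (by omega : 2 * i - 1 ≤ 2 * n)]
    have e2 : 2 * n = (2 * n - 1) + 1 := by omega
    rw [e2, Finset.sum_Ico_succ_top (by omega : 2 * i - 1 ≤ 2 * n - 1), ih]
    have hodd : ¬ Even (2 * n - 1) := by rw [Nat.even_iff]; omega
    have heven : Even (2 * n - 1 + 1) := by rw [Nat.even_iff]; omega
    rw [if_neg hodd, if_pos heven, Finset.sum_range_succ]
    ring

lemma core (m i j : ℕ) (hi1 : 1 ≤ i) (hij : i ≤ j) (hjm : 2 * j - 1 ≤ m)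
    (w : ℕ → ℝ) (Ri Rj FI FJ : ℝ)
    (hFI : FI = (∑ n ∈ Finset.range (2 * i - 1), w n) * Ri)
    (hFJ : FJ = (∑ n ∈ Finset.range (2 * j - 1), w n) * Rj) :
    ∑ b ∈ Finset.range m, ∑ a ∈ Finset.range b,
      (uu w Ri FI (2 * i - 1) a * uu w Rj FJ (2 * j - 1) b
        - uu w Ri FI (2 * i - 1) b * uu w Rj FJ (2 * j - 1) a) = 0 := by
  have hci : Odd (2 * i - 1) := by rw [Nat.odd_iff]; omega
  have hcj : Odd (2 * j - 1) := by rw [Nat.odd_iff]; omega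
  set u := uu w Ri FI (2 * i - 1) with hu
  set v := uu w Rj FJ (2 * j - 1) with hv
  have step1 : ∀ b, ∑ a ∈ Finset.range b, (u a * v b - u b * v a)
      = (∑ a ∈ Finset.range b, u a) * v b - u b * ∑ a ∈ Finset.range b, v a := by
    intro b
    rw [Finset.sum_sub_distrib, ← Finset.sum_mul, ← Finset.mul_sum]
  have step2 : ∀ b ∈ Finset.range m,
      (∑ a ∈ Finset.range b, u a) * v b - u b * ∑ a ∈ Finset.range b, v a
      = if 2 * i - 1 ≤ b ∧ b < 2 * j - 1 then
          FI * Rj * (if Even b then -(∑ x ∈ Finset.range b, w x)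
            else w b + ∑ x ∈ Finset.range b, w x)
        else 0 := by
    intro b _
    by_cases h1 : b < 2 * i - 1
    · rw [uu_prefix1 w Ri FI _ b (by omega), uu_prefix1 w Rj FJ _ b (by omega)]
      simp only [hu, hv, uu]
      rw [if_neg (show ¬(2 * i - 1 ≤ b ∧ b < 2 * j - 1) by omega), if_pos h1,
        if_pos (show b < 2 * j - 1 by omega)]
      ring
    · by_cases h2 : b < 2 * j - 1
      · rw [uu_prefix2 w Ri FI _ hci hFI b (by omega), uu_prefix1 w Rj FJ _ b (by omega)]
        simp only [hu, hv, uu]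
        rw [if_pos (show 2 * i - 1 ≤ b ∧ b < 2 * j - 1 from ⟨by omega, h2⟩), if_neg h1,
          if_pos h2]
        rcases Nat.even_or_odd b with he | ho
        · simp only [if_pos he, if_neg (Nat.not_odd_iff_even.mpr he)]
          ring
        · simp only [if_neg (Nat.not_even_iff_odd.mpr ho), if_pos ho]
          ring
      · rw [uu_prefix2 w Ri FI _ hci hFI b (by omega), uu_prefix2 w Rj FJ _ hcj hFJ b (by omega)]
        simp only [hu, hv, uu]
        rw [if_neg (show ¬(2 * i - 1 ≤ b ∧ b < 2 * j - 1) by omega), if_neg h1, if_neg h2]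
        rcases Nat.even_or_odd b with he | ho
        · simp only [if_pos he, if_neg (Nat.not_odd_iff_even.mpr he)]
          ring
        · simp only [if_neg (Nat.not_even_iff_odd.mpr ho), if_pos ho]
          ring
  calc ∑ b ∈ Finset.range m, ∑ a ∈ Finset.range b, (u a * v b - u b * v a)
      = ∑ b ∈ Finset.range m, (if 2 * i - 1 ≤ b ∧ b < 2 * j - 1 then
          FI * Rj * (if Even b then -(∑ x ∈ Finset.range b, w x)
            else w b + ∑ x ∈ Finset.range b, w x) else 0) := by
        refine Finset.sum_congr rfl fun b hb => ?_
        rw [step1 b, step2 b hb]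
    _ = ∑ b ∈ Finset.Ico (2 * i - 1) (2 * j - 1),
          FI * Rj * (if Even b then -(∑ x ∈ Finset.range b, w x)
            else w b + ∑ x ∈ Finset.range b, w x) := by
        rw [← Finset.sum_filter]
        refine Finset.sum_congr ?_ fun _ _ => rfl
        ext b
        simp only [Finset.mem_filter, Finset.mem_range, Finset.mem_Ico]
        omega
    _ = FI * Rj * ∑ b ∈ Finset.Ico (2 * i - 1) (2 * j - 1),
          (if Even b then -(∑ x ∈ Finset.range b, w x)
            else w b + ∑ x ∈ Finset.range b, w x) := by rw [Finset.mul_sum]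
    _ = 0 := by rw [telescope w i hi1 j hij]; ring

lemma qbracket_antisymm {m : ℕ} (F G : (Fin m → ℝ) → ℝ) (y : Fin m → ℝ) :
    qbracket F G y = - qbracket G F y := by
  have h : qbracket F G y + qbracket G F y = 0 := by
    unfold qbracket
    rw [← Finset.sum_add_distrib]
    refine Finset.sum_eq_zero fun a _ => ?_
    rw [← Finset.sum_add_distrib]
    refine Finset.sum_eq_zero fun b _ => ?_
    ring
  linarith

lemma fin_pairs_sum (m : ℕ) (f : ℕ → ℕ → ℝ) :
    (∑ a : Fin m, ∑ b ∈ Finset.univ.filter (fun b => a < b), f (a : ℕ) (b : ℕ))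
      = ∑ b ∈ Finset.range m, ∑ a ∈ Finset.range b, f a b := by
  have h1 : ∀ a : Fin m, (∑ b ∈ Finset.univ.filter (fun b => a < b), f (a : ℕ) (b : ℕ))
      = ∑ b : Fin m, if (a : ℕ) < (b : ℕ) then f (a : ℕ) (b : ℕ) else 0 := by
    intro a
    rw [Finset.sum_filter]
    exact Finset.sum_congr rfl fun b _ => if_congr Fin.lt_def rfl rfl
  rw [Finset.sum_congr rfl fun a _ => h1 a,
    Fin.sum_univ_eq_sum_range
      (fun A => ∑ b : Fin m, if A < (b : ℕ) then f A (b : ℕ) else 0) m,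
    Finset.sum_congr rfl fun a (_ : a ∈ Finset.range m) =>
      Fin.sum_univ_eq_sum_range (fun B => if a < B then f a B else 0) m,
    Finset.sum_comm]
  refine Finset.sum_congr rfl fun b hb => ?_
  have hbm := Finset.mem_range.mp hb
  rw [← Finset.sum_filter]
  refine Finset.sum_congr ?_ fun _ _ => rfl
  ext x
  simp only [Finset.mem_filter, Finset.mem_range]
  omega

noncomputable def wext (m : ℕ) (y : Fin m → ℝ) (n : ℕ) : ℝ :=
  if h : n < m then y ⟨n, h⟩ else 0

lemma wext_coe (m : ℕ) (y : Fin m → ℝ) (l : Fin m) : wext m y (l : ℕ) = y l := by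
  rw [wext, dif_pos l.isLt]

lemma sumconv (m c : ℕ) (hc : c ≤ m) (y : Fin m → ℝ) :
    (∑ a ∈ Finset.univ.filter (fun a : Fin m => (a : ℕ) < c), y a)
      = ∑ n ∈ Finset.range c, wext m y n := by
  calc (∑ a ∈ Finset.univ.filter (fun a : Fin m => (a : ℕ) < c), y a)
      = ∑ a : Fin m, if (a : ℕ) < c then wext m y (a : ℕ) else 0 := by
        rw [Finset.sum_filter]
        exact Finset.sum_congr rfl fun a _ => by rw [wext_coe]
    _ = ∑ n ∈ Finset.range m, (if n < c then wext m y n else 0) :=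
        Fin.sum_univ_eq_sum_range (fun n => if n < c then wext m y n else 0) m
    _ = ∑ n ∈ Finset.range c, wext m y n := by
        rw [← Finset.sum_filter]
        refine Finset.sum_congr ?_ fun _ _ => rfl
        ext x
        simp only [Finset.mem_filter, Finset.mem_range]
        omega

lemma aux_involution (m i j : ℕ) (hi1 : 1 ≤ i) (hj1 : 1 ≤ j) (hij : i ≤ j)
    (hjm : 2 * j - 1 ≤ m) (y : Fin m → ℝ) (hnz : ∀ l : Fin m, Odd (l : ℕ) → y l ≠ 0) :
    qbracket (Fk m i) (Fk m j) y = 0 := by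
  classical
  have hkeyI : ∀ l : Fin m, y l * fderiv ℝ (Fk m i) y (Pi.single l 1)
      = uu (wext m y) ((∏ a ∈ Eset m i, y a) / (∏ a ∈ Oset m i, y a)) (Fk m i y)
          (2 * i - 1) (l : ℕ) := by
    intro l
    rw [fk_mul_deriv m i y hnz l, uu, wext_coe]
  have hkeyJ : ∀ l : Fin m, y l * fderiv ℝ (Fk m j) y (Pi.single l 1)
      = uu (wext m y) ((∏ a ∈ Eset m j, y a) / (∏ a ∈ Oset m j, y a)) (Fk m j y)
          (2 * j - 1) (l : ℕ) := by
    intro l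
    rw [fk_mul_deriv m j y hnz l, uu, wext_coe]
  have hFI : Fk m i y = (∑ n ∈ Finset.range (2 * i - 1), wext m y n)
      * ((∏ a ∈ Eset m i, y a) / (∏ a ∈ Oset m i, y a)) := by
    rw [← sumconv m (2 * i - 1) (by omega) y]
    rfl
  have hFJ : Fk m j y = (∑ n ∈ Finset.range (2 * j - 1), wext m y n)
      * ((∏ a ∈ Eset m j, y a) / (∏ a ∈ Oset m j, y a)) := by
    rw [← sumconv m (2 * j - 1) (by omega) y]
    rfl
  calc qbracket (Fk m i) (Fk m j) y
      = ∑ a : Fin m, ∑ b ∈ Finset.univ.filter (fun b => a < b),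
          (uu (wext m y) ((∏ a ∈ Eset m i, y a) / (∏ a ∈ Oset m i, y a)) (Fk m i y)
              (2 * i - 1) (a : ℕ)
            * uu (wext m y) ((∏ a ∈ Eset m j, y a) / (∏ a ∈ Oset m j, y a)) (Fk m j y)
              (2 * j - 1) (b : ℕ)
          - uu (wext m y) ((∏ a ∈ Eset m i, y a) / (∏ a ∈ Oset m i, y a)) (Fk m i y)
              (2 * i - 1) (b : ℕ)
            * uu (wext m y) ((∏ a ∈ Eset m j, y a) / (∏ a ∈ Oset m j, y a)) (Fk m j y)
              (2 * j - 1) (a : ℕ)) := by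
        unfold qbracket
        refine Finset.sum_congr rfl fun a _ => Finset.sum_congr rfl fun b _ => ?_
        rw [← hkeyI a, ← hkeyI b, ← hkeyJ a, ← hkeyJ b]
        ring
    _ = ∑ b ∈ Finset.range m, ∑ a ∈ Finset.range b,
          (uu (wext m y) ((∏ a ∈ Eset m i, y a) / (∏ a ∈ Oset m i, y a)) (Fk m i y)
              (2 * i - 1) a
            * uu (wext m y) ((∏ a ∈ Eset m j, y a) / (∏ a ∈ Oset m j, y a)) (Fk m j y)
              (2 * j - 1) b
          - uu (wext m y) ((∏ a ∈ Eset m i, y a) / (∏ a ∈ Oset m i, y a)) (Fk m i y)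
              (2 * i - 1) b
            * uu (wext m y) ((∏ a ∈ Eset m j, y a) / (∏ a ∈ Oset m j, y a)) (Fk m j y)
              (2 * j - 1) a) :=
        fin_pairs_sum m (fun a b =>
          uu (wext m y) ((∏ a ∈ Eset m i, y a) / (∏ a ∈ Oset m i, y a)) (Fk m i y)
              (2 * i - 1) a
            * uu (wext m y) ((∏ a ∈ Eset m j, y a) / (∏ a ∈ Oset m j, y a)) (Fk m j y)
              (2 * j - 1) b
          - uu (wext m y) ((∏ a ∈ Eset m i, y a) / (∏ a ∈ Oset m i, y a)) (Fk m i y)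
              (2 * i - 1) b
            * uu (wext m y) ((∏ a ∈ Eset m j, y a) / (∏ a ∈ Oset m j, y a)) (Fk m j y)
              (2 * j - 1) a)
    _ = 0 := core m i j hi1 hij hjm (wext m y) _ _ _ _ hFI hFJ

/-- for `m` odd and `1 ≤ i, j ≤ (m+1)/2`, the functions `F_i` and `F_j`
are in involution: `{F_i, F_j}^q = 0` where all denominators are nonzero. -/
theorem Fk_in_involution (m : ℕ) (hm : Odd m) (i j : ℕ)
    (hi1 : 1 ≤ i) (hi2 : i ≤ (m + 1) / 2) (hj1 : 1 ≤ j) (hj2 : j ≤ (m + 1) / 2)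
    (y : Fin m → ℝ) (hnz : ∀ l : Fin m, Odd (l : ℕ) → y l ≠ 0) :
    qbracket (Fk m i) (Fk m j) y = 0 := by
  obtain ⟨r, hr⟩ := hm
  rcases le_total i j with h | h
  · exact aux_involution m i j hi1 hj1 h (by omega) y hnz
  · rw [qbracket_antisymm, aux_involution m j i hj1 hi1 h (by omega) y hnz, neg_zero]
end

section
/- For the quadratic Poisson bracket on ℝ^m, the Poisson bracket of u_i = y_1+⋯+y_i with H = y_1+⋯+y_m is {u_i, H}^q = u_i(H − u_i); consequently the Kahan substitution u_i ↦ u_i(1+εH)/(1−εH+2εu_i) fixes H and each level set {H = c} is invariant. -/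
lemma fderiv_sum_coords {m : ℕ} (S : Finset (Fin m)) (y v : Fin m → ℝ) :
    fderiv ℝ (fun z : Fin m → ℝ => ∑ l ∈ S, z l) y v = ∑ l ∈ S, v l := by
  have h : HasFDerivAt (fun z : Fin m → ℝ => ∑ l ∈ S, z l)
      (∑ l ∈ S, ContinuousLinearMap.proj (R := ℝ) (φ := fun _ : Fin m => ℝ) l) y := by
    apply HasFDerivAt.fun_sum
    intro l _
    exact (ContinuousLinearMap.proj (R := ℝ) (φ := fun _ : Fin m => ℝ) l).hasFDerivAt
  rw [h.fderiv]
  simp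

/-- `{u_i, H}^q = u_i (H − u_i)` for `u_i = y_1 + ⋯ + y_i`, `H = y_1 + ⋯ + y_m`;
and the Kahan substitution `u_i ↦ u_i (1+εH)/(1−εH+2εu_i)` fixes `H` (applied to `i = m`),
so each level set `{H = c}` is invariant. -/
theorem bracket_ui_H_and_H_fixed (m : ℕ) (i : Fin m) (y : Fin m → ℝ)
    (ε : ℝ) (u : ℕ → ℝ) (hden : 1 - ε * u m + 2 * ε * u m ≠ 0) :
    (qbracket (fun z => ∑ l ∈ Finset.univ.filter (fun l => l ≤ i), z l) (fun z => ∑ l, z l) y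
      = (∑ l ∈ Finset.univ.filter (fun l => l ≤ i), y l) *
        ((∑ l, y l) - ∑ l ∈ Finset.univ.filter (fun l => l ≤ i), y l))
    ∧ u m * (1 + ε * u m) / (1 - ε * u m + 2 * ε * u m) = u m := by
  constructor
  · unfold qbracket
    have hf : ∀ v : Fin m → ℝ,
        fderiv ℝ (fun z : Fin m → ℝ => ∑ l ∈ Finset.univ.filter (fun l => l ≤ i), z l) y v
          = ∑ l ∈ Finset.univ.filter (fun l => l ≤ i), v l :=
      fun v => fderiv_sum_coords _ y v
    have hg : ∀ v : Fin m → ℝ,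
        fderiv ℝ (fun z : Fin m → ℝ => ∑ l, z l) y v = ∑ l, v l :=
      fun v => fderiv_sum_coords Finset.univ y v
    simp only [hf, hg]
    have hsingle : ∀ (j : Fin m), (∑ l ∈ Finset.univ.filter (fun l => l ≤ i),
        (Pi.single j 1 : Fin m → ℝ) l) = if j ≤ i then 1 else 0 := by
      intro j
      by_cases h : j ≤ i
      · rw [Finset.sum_eq_single j]
        · simp [h]
        · intro b _ hb; simp [Pi.single_eq_of_ne hb]
        · simp [h]
      · rw [Finset.sum_eq_zero, if_neg h]
        intro b hb
        simp only [Finset.mem_filter] at hb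
        have : b ≠ j := by rintro rfl; exact h hb.2
        simp [Pi.single_eq_of_ne this]
    have hall : ∀ (j : Fin m), (∑ l, (Pi.single j 1 : Fin m → ℝ) l) = 1 := by
      intro j; simp [Finset.sum_pi_single]
    simp only [hsingle, hall, mul_one]
    -- RHS
    have hsplit : (∑ l, y l) - ∑ l ∈ Finset.univ.filter (fun l => l ≤ i), y l
        = ∑ l ∈ Finset.univ.filter (fun l => ¬ l ≤ i), y l := by
      rw [eq_comm, eq_sub_iff_add_eq, add_comm, Finset.sum_filter_add_sum_filter_not]
    rw [hsplit, Finset.sum_mul_sum]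
    simp only [Finset.sum_filter]
    apply Finset.sum_congr rfl
    intro a _
    by_cases ha : a ≤ i
    · simp only [ha, if_true]
      apply Finset.sum_congr rfl
      intro b _
      by_cases hab : a < b <;> by_cases hb : b ≤ i <;> simp [hab, hb]
      · exact absurd (ha.trans_lt (lt_of_not_ge hb)) hab
    · simp only [ha, if_false]
      apply Finset.sum_eq_zero
      intro b _
      by_cases hab : a < b <;> by_cases hb : b ≤ i <;> simp [hab, hb]
      exact absurd ((hb.trans_lt (lt_of_not_ge ha)).trans hab) (lt_irrefl b)
  · have : 1 - ε * u m + 2 * ε * u m = 1 + ε * u m := by ring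
    rw [this] at hden ⊢
    exact mul_div_cancel_right₀ (u m) hden
end
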